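/- Let n = k·m with k, m positive integers, s an integer with gcd(s, m) = 1, and t₁, t₂, t₃ integers. If the system x₁·y₁ ≡ t₁·s·k (mod n), x₂·y₂ ≡ t₂·s·k (mod n), x₁·y₂ + x₂·y₁ ≡ t₃·s·k (mod n) has an integer solution (x₁, y₁, x₂, y₂), then the congruence x² − t₃·x + t₁·t₂ ≡ 0 (mod m) has an integer solution. -/

import Mathlib

lemma key_dvd (K u v : ℤ) (h1 : K ∣ u + v) (h2 : K^2 ∣ u * v) : K ∣ u := by
  rcases eq_or_ne K 0 with rfl | hK
  · simp at h1 h2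
    have hu : u = -v := by linarith
    rcases h2 with h | h
    · simp [h]
    · have : u = 0 := by omega
      simp [this]
  · have hd : 0 < Int.gcd u K := Int.gcd_pos_of_ne_zero_right u hK
    set d : ℤ := (Int.gcd u K : ℤ) with hdef
    have hdz : d ≠ 0 := Int.natCast_ne_zero.mpr hd.ne'
    have hdu : d ∣ u := Int.gcd_dvd_left u K
    have hdK : d ∣ K := Int.gcd_dvd_right u K
    set u₀ := u / d with hu₀
    set K₀ := K / d with hK₀
    have hu : u = d * u₀ := (Int.mul_ediv_cancel' hdu).symm
    have hKe : K = d * K₀ := (Int.mul_ediv_cancel' hdK).symm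
    have cop : IsCoprime u₀ K₀ := by
      rw [Int.isCoprime_iff_gcd_eq_one]
      exact Int.gcd_div_gcd_div_gcd hd
    obtain ⟨c, hc⟩ := h1
    have hv : v = d * (K₀ * c - u₀) := by
      have : v = K * c - u := by linarith
      rw [this, hKe, hu]; ring
    have cop2 : IsCoprime K₀ (K₀ * c - u₀) := by
      have := (cop.symm).neg_right
      have h' : IsCoprime K₀ (-u₀ + K₀ * c) := this.add_mul_left_right c
      have : K₀ * c - u₀ = -u₀ + K₀ * c := by ring
      rwa [this]
    have hdvd : K₀ ^ 2 ∣ u₀ * (K₀ * c - u₀) := by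
      have h2' : d ^ 2 * K₀ ^ 2 ∣ d ^ 2 * (u₀ * (K₀ * c - u₀)) := by
        have e : u * v = d ^ 2 * (u₀ * (K₀ * c - u₀)) := by rw [hu, hv]; ring
        have e2 : K ^ 2 = d ^ 2 * K₀ ^ 2 := by rw [hKe]; ring
        rw [← e, ← e2]; exact h2
      exact (mul_dvd_mul_iff_left (pow_ne_zero 2 hdz)).mp h2'
    have copP : IsCoprime K₀ (u₀ * (K₀ * c - u₀)) := (cop.symm).mul_right cop2
    have hunit : IsUnit K₀ :=
      copP.isUnit_of_dvd' dvd_rfl (dvd_trans (dvd_pow_self K₀ two_ne_zero) hdvd)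
    rcases Int.isUnit_iff.mp hunit with h1 | h1
    · rw [hKe, h1, mul_one]; exact hdu
    · rw [hKe, h1]; simpa using hdu

theorem stmt_3 (k m : ℕ) (hk : 0 < k) (hm : 0 < m) (n : ℕ) (hn : n = k * m)
    (s t₁ t₂ t₃ : ℤ) (hs : Int.gcd s m = 1)
    (h : ∃ x₁ y₁ x₂ y₂ : ℤ,
      Int.ModEq n (x₁ * y₁) (t₁ * s * k) ∧
      Int.ModEq n (x₂ * y₂) (t₂ * s * k) ∧
      Int.ModEq n (x₁ * y₂ + x₂ * y₁) (t₃ * s * k)) :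
    ∃ x : ℤ, Int.ModEq m (x ^ 2 - t₃ * x + t₁ * t₂) 0 := by
  obtain ⟨x₁, y₁, x₂, y₂, h1, h2, h3⟩ := h
  rw [Int.modEq_iff_dvd] at h1 h2 h3
  obtain ⟨A, hA⟩ := h1
  obtain ⟨B, hB⟩ := h2
  obtain ⟨C, hC⟩ := h3
  have hKz : (k : ℤ) ≠ 0 := Int.natCast_ne_zero.mpr hk.ne'
  have hn' : (n : ℤ) = (k : ℤ) * m := by rw [hn]; push_cast; ring
  rw [hn'] at hA hB hC
  set u : ℤ := x₁ * y₂ with hu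
  set v : ℤ := x₂ * y₁ with hv
  have hsum : u + v = t₃ * s * k - (k * m) * C := by
    have : t₃ * s * k - (u + v) = (k * m) * C := hC
    linarith
  have hkdvd : (k : ℤ) ∣ u + v := ⟨t₃ * s - m * C, by rw [hsum]; ring⟩
  set E : ℤ := A * t₂ * s + B * t₁ * s - (m : ℤ) * A * B with hE
  have hk2' : u * v = (k : ℤ)^2 * (t₁ * t₂ * s^2 - m * E) := by
    have e1 : x₁ * y₁ = t₁ * s * k - (k * m) * A := by linarith [hA]
    have e2 : x₂ * y₂ = t₂ * s * k - (k * m) * B := by linarith [hB]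
    have e3 : u * v = (x₁ * y₁) * (x₂ * y₂) := by rw [hu, hv]; ring
    rw [e3, e1, e2, hE]; ring
  have hk2 : (k : ℤ)^2 ∣ u * v := ⟨_, hk2'⟩
  obtain ⟨u', hu'⟩ := key_dvd (k : ℤ) u v hkdvd hk2
  obtain ⟨w, hw⟩ := hkdvd
  have hw2 : w = t₃ * s - m * C :=
    mul_left_cancel₀ hKz (by rw [← hw, hsum]; ring)
  have hv' : v = (k : ℤ) * (w - u') := by rw [mul_sub, ← hu']; linarith [hw]
  have hp2 : u' * (w - u') = t₁ * t₂ * s^2 - m * E := by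
    refine mul_left_cancel₀ (pow_ne_zero 2 hKz) ?_
    rw [← hk2', hu', hv']; ring
  have hcop : IsCoprime s (m : ℤ) := Int.isCoprime_iff_gcd_eq_one.mpr hs
  obtain ⟨a, b, hab⟩ := hcop
  refine ⟨a * u', ?_⟩
  rw [Int.modEq_iff_dvd]
  refine ⟨-(a^2 * (E - C * u') - t₃ * (a * u') * b + t₁ * t₂ * b * (s * a + 1)), ?_⟩
  linear_combination (-(a^2 * u')) * hw2 + a^2 * hp2 + (-(t₃ * (a * u')) + t₁ * t₂ * (s * a + 1)) * hab
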